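/- Let d ≥ 1, p ≥ 1, 0 < α < d, and let f : ℝ^d → ℝ be measurable. Then ∫_{ℝ^d} ∫_{{x ∈ ℝ^d : |y| ≥ 2|x|}} |f(y)|^p |x−y|^{−d} |x|^{−α} |y|^{−α} dx dy ≤ (2^{2d−α} |S^{d−1}| / (d − α)) ∫_{ℝ^d} |f(y)|^p |y|^{−2α} dy (as an inequality in [0, ∞]). -/

import Mathlib

open MeasureTheory Metric Set Filter

/-- The surface measure of the unit sphere `S^{d-1}` in `ℝ^d`. -/
noncomputable def sphereMeasure (d : ℕ) : ℝ :=
  2 * Real.pi ^ ((d : ℝ) / 2) / Real.Gamma ((d : ℝ) / 2)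

open scoped ENNReal

local notation "dim" => Module.finrank ℝ

variable {E : Type*} [NormedAddCommGroup E] [NormedSpace ℝ E]
  [MeasurableSpace E] [Nontrivial E] [FiniteDimensional ℝ E] [BorelSpace E]
  (μ : Measure E) [μ.IsAddHaarMeasure]

lemma my_lintegral_fun_norm_addHaar (g : ℝ → ℝ≥0∞) (hg : Measurable g) :
    ∫⁻ x, g ‖x‖ ∂μ
      = (dim E : ℝ≥0∞) * μ (ball 0 1) *
          ∫⁻ r in Ioi (0 : ℝ), ENNReal.ofReal (r ^ (dim E - 1)) * g r := by
  have hmeas : Measurable fun p : sphere (0 : E) 1 × Ioi (0 : ℝ) => g p.2 :=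
    hg.comp (measurable_subtype_coe.comp measurable_snd)
  calc
    ∫⁻ x, g ‖x‖ ∂μ = ∫⁻ x : ({(0)}ᶜ : Set E), g ‖x.1‖ ∂(μ.comap (↑)) := by
      rw [lintegral_subtype_comap (measurableSet_singleton _).compl fun x ↦ g ‖x‖,
        MeasureTheory.restrict_compl_singleton]
    _ = ∫⁻ x : sphere (0 : E) 1 × Ioi (0 : ℝ), g x.2
          ∂μ.toSphere.prod (.volumeIoiPow (dim E - 1)) :=
      by rw [← μ.measurePreserving_homeomorphUnitSphereProd.lintegral_comp hmeas]; simp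
    _ = μ.toSphere univ * ∫⁻ r : Ioi (0 : ℝ), g r ∂(Measure.volumeIoiPow (dim E - 1)) := by
      rw [lintegral_prod _ hmeas.aemeasurable]
      simp [lintegral_const, mul_comm]
    _ = _ := by
      rw [Measure.toSphere_apply_univ, Measure.volumeIoiPow,
        lintegral_withDensity_eq_lintegral_mul _
          ((measurable_subtype_coe.pow_const _).ennreal_ofReal)
          (show Measurable fun r : Ioi (0:ℝ) => g r from hg.comp measurable_subtype_coe)]
      simp only [Pi.mul_apply]
      rw [lintegral_subtype_comap measurableSet_Ioi
        (fun r : ℝ => ENNReal.ofReal (r ^ (dim E - 1)) * g r)]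


lemma sphereMeasure_eq (d : ℕ) (hd : 1 ≤ d) :
    ((d : ℝ≥0∞)) * volume (ball (0 : EuclideanSpace ℝ (Fin d)) 1)
      = ENNReal.ofReal (sphereMeasure d) := by
  haveI : Nonempty (Fin d) := ⟨⟨0, hd⟩⟩
  have hd2 : (0:ℝ) < (d:ℝ)/2 := by positivity
  have hΓ : 0 < Real.Gamma ((d:ℝ)/2) := Real.Gamma_pos_of_pos hd2
  rw [EuclideanSpace.volume_ball, Fintype.card_fin, ENNReal.ofReal_one, one_pow, one_mul,
    ← ENNReal.ofReal_natCast, ← ENNReal.ofReal_mul (by positivity)]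
  congr 1
  have h1 : Real.sqrt Real.pi ^ d = Real.pi ^ ((d:ℝ)/2) := by
    rw [Real.sqrt_eq_rpow, ← Real.rpow_natCast (Real.pi ^ ((1:ℝ)/2)) d,
      ← Real.rpow_mul Real.pi_pos.le]
    ring_nf
  have h2 : Real.Gamma ((d:ℝ)/2 + 1) = ((d:ℝ)/2) * Real.Gamma ((d:ℝ)/2) :=
    Real.Gamma_add_one hd2.ne'
  rw [h1, h2, sphereMeasure]
  have hdpos : (0:ℝ) < d := by exact_mod_cast hd
  field_simp

lemma sphereMeasure_pos (d : ℕ) (hd : 1 ≤ d) : 0 < sphereMeasure d := by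
  have hd2 : (0:ℝ) < (d:ℝ)/2 := by positivity
  have hΓ : 0 < Real.Gamma ((d:ℝ)/2) := Real.Gamma_pos_of_pos hd2
  have : (0:ℝ) < Real.pi ^ ((d:ℝ)/2) := Real.rpow_pos_of_pos Real.pi_pos _
  unfold sphereMeasure
  positivity

lemma closedBall_rpow_lintegral (d : ℕ) (hd : 1 ≤ d) (α : ℝ) (hα : 0 < α) (hα' : α < d)
    (R : ℝ) (hR : 0 < R) :
    ∫⁻ x in closedBall (0 : EuclideanSpace ℝ (Fin d)) R, ENNReal.ofReal (‖x‖ ^ (-α))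
      ≤ ENNReal.ofReal (sphereMeasure d * R ^ ((d:ℝ) - α) / ((d:ℝ) - α)) := by
  haveI : Nonempty (Fin d) := ⟨⟨0, hd⟩⟩
  haveI : Nontrivial (EuclideanSpace ℝ (Fin d)) :=
    Module.nontrivial_of_finrank_pos (R := ℝ)
      (by rw [finrank_euclideanSpace_fin]; exact hd)
  set g : ℝ → ℝ≥0∞ := (Iic R).indicator (fun r => ENNReal.ofReal (r ^ (-α))) with hg
  have hgm : Measurable g := Measurable.indicator (by fun_prop) measurableSet_Iic
  have key : ∫⁻ x in closedBall (0 : EuclideanSpace ℝ (Fin d)) R,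
      ENNReal.ofReal (‖x‖ ^ (-α)) = ∫⁻ x : EuclideanSpace ℝ (Fin d), g ‖x‖ := by
    rw [← lintegral_indicator measurableSet_closedBall]
    refine lintegral_congr fun x => ?_
    by_cases hx : ‖x‖ ≤ R
    · rw [Set.indicator_of_mem (mem_closedBall_zero_iff.mpr hx),
        hg, Set.indicator_of_mem (mem_Iic.mpr hx)]
    · rw [Set.indicator_of_notMem (fun h => hx (mem_closedBall_zero_iff.mp h)),
        hg, Set.indicator_of_notMem (fun h => hx (mem_Iic.mp h))]
  rw [key, my_lintegral_fun_norm_addHaar volume g hgm]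
  have hfr : Module.finrank ℝ (EuclideanSpace ℝ (Fin d)) = d := finrank_euclideanSpace_fin
  rw [hfr]
  have hstep : ∫⁻ r in Ioi (0:ℝ), ENNReal.ofReal (r ^ (d - 1)) * g r
      = ∫⁻ r in Ioc (0:ℝ) R, ENNReal.ofReal (r ^ ((d:ℝ) - 1 - α)) := by
    have : ∀ r : ℝ, ENNReal.ofReal (r ^ (d - 1)) * g r
        = (Iic R).indicator (fun r => ENNReal.ofReal (r ^ (d-1)) * ENNReal.ofReal (r ^ (-α))) r := by
      intro r
      by_cases hr : r ∈ Iic R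
      · rw [hg, Set.indicator_of_mem hr, Set.indicator_of_mem hr]
      · rw [hg, Set.indicator_of_notMem hr, Set.indicator_of_notMem hr, mul_zero]
    simp only [this]
    rw [lintegral_indicator measurableSet_Iic, Measure.restrict_restrict measurableSet_Iic,
      Set.inter_comm, Set.Ioi_inter_Iic]
    refine setLIntegral_congr_fun measurableSet_Ioc (fun r hr => ?_)
    rw [← ENNReal.ofReal_mul (pow_nonneg hr.1.le _)]
    congr 1
    rw [← Real.rpow_natCast r (d-1), Nat.cast_sub hd, Nat.cast_one,
      ← Real.rpow_add hr.1]
    ring_nf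
  rw [hstep]
  have hval : ∫⁻ r in Set.Ioc (0:ℝ) R, ENNReal.ofReal (r ^ ((d:ℝ) - 1 - α))
      = ENNReal.ofReal (R ^ ((d:ℝ) - α) / ((d:ℝ) - α)) := by
    have hs : (-1:ℝ) < (d:ℝ) - 1 - α := by linarith
    have hint : IntervalIntegrable (fun r : ℝ => r ^ ((d:ℝ) - 1 - α)) volume 0 R :=
      intervalIntegral.intervalIntegrable_rpow' hs
    have hnn : 0 ≤ᵐ[volume.restrict (Set.Ioc (0:ℝ) R)]
        fun r : ℝ => r ^ ((d:ℝ) - 1 - α) := by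
      filter_upwards [ae_restrict_mem measurableSet_Ioc] with r hr
      exact Real.rpow_nonneg hr.1.le _
    rw [← ofReal_integral_eq_lintegral_ofReal
        ((intervalIntegrable_iff_integrableOn_Ioc_of_le hR.le).mp hint) hnn]
    congr 1
    rw [← intervalIntegral.integral_of_le hR.le,
      integral_rpow (Or.inl hs)]
    have h0 : (0:ℝ) ^ ((d:ℝ) - 1 - α + 1) = 0 :=
      Real.zero_rpow (by intro h; linarith [h ▸ (by linarith : (0:ℝ) < (d:ℝ) - α)])
    rw [show (d:ℝ) - 1 - α + 1 = (d:ℝ) - α by ring] at h0 ⊢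
    rw [h0, sub_zero]
  rw [hval, sphereMeasure_eq d hd, ← ENNReal.ofReal_mul (sphereMeasure_pos d hd).le,
    mul_div_assoc]

/-- The off-diagonal weighted integral `I₂` bound:
`∫_{ℝ^d} ∫_{|y| ≥ 2|x|} |f(y)|^p |x-y|^{-d} |x|^{-α} |y|^{-α} dx dy
  ≤ (2^{2d-α}|S^{d-1}|/(d-α)) ∫ |f(y)|^p |y|^{-2α} dy`. -/
theorem weighted_offdiagonal_bound
    (d : ℕ) (hd : 1 ≤ d) (p : ℝ) (hp : 1 ≤ p) (α : ℝ) (hα : 0 < α) (hα' : α < d)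
    (f : EuclideanSpace ℝ (Fin d) → ℝ) (hf : Measurable f) :
    (∫⁻ y : EuclideanSpace ℝ (Fin d),
      ∫⁻ x in {x : EuclideanSpace ℝ (Fin d) | 2 * ‖x‖ ≤ ‖y‖},
        ENNReal.ofReal
          (|f y| ^ p / ‖x - y‖ ^ (d : ℝ) * ‖x‖ ^ (-α) * ‖y‖ ^ (-α)))
    ≤ ENNReal.ofReal ((2 : ℝ) ^ (2 * (d : ℝ) - α) * sphereMeasure d / ((d : ℝ) - α)) *
        ∫⁻ y : EuclideanSpace ℝ (Fin d),
          ENNReal.ofReal (|f y| ^ p * ‖y‖ ^ (-(2 * α))) := by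
  set C : ℝ := (2 : ℝ) ^ (2 * (d : ℝ) - α) * sphereMeasure d / ((d : ℝ) - α) with hC
  have hs0 : (0:ℝ) < sphereMeasure d := sphereMeasure_pos d hd
  have ht : (0:ℝ) < (d:ℝ) - α := by linarith
  -- pointwise (in y) bound on the inner integral
  have inner_bound : ∀ y : EuclideanSpace ℝ (Fin d),
      (∫⁻ x in {x : EuclideanSpace ℝ (Fin d) | 2 * ‖x‖ ≤ ‖y‖},
        ENNReal.ofReal
          (|f y| ^ p / ‖x - y‖ ^ (d : ℝ) * ‖x‖ ^ (-α) * ‖y‖ ^ (-α)))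
      ≤ ENNReal.ofReal C * ENNReal.ofReal (|f y| ^ p * ‖y‖ ^ (-(2 * α))) := by
    intro y
    rcases eq_or_lt_of_le (norm_nonneg y) with hy | hy
    · -- y = 0 : integrand vanishes
      have : ∀ x : EuclideanSpace ℝ (Fin d),
          ENNReal.ofReal (|f y| ^ p / ‖x - y‖ ^ (d : ℝ) * ‖x‖ ^ (-α) * ‖y‖ ^ (-α)) = 0 := by
        intro x
        rw [← hy, Real.zero_rpow (neg_ne_zero.mpr hα.ne'), mul_zero, ENNReal.ofReal_zero]
      simp only [this, lintegral_zero]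
      exact zero_le
    set A := |f y| ^ p with hA
    have hA0 : 0 ≤ A := Real.rpow_nonneg (abs_nonneg _) _
    set n := ‖y‖ with hn
    set K := A * 2 ^ (d:ℝ) * n ^ (-(d:ℝ)) * n ^ (-α) with hK
    have hK0 : 0 ≤ K := by
      have h1 : (0:ℝ) ≤ 2 ^ (d:ℝ) := by positivity
      have h2 : (0:ℝ) ≤ n ^ (-(d:ℝ)) := Real.rpow_nonneg hy.le _
      have h3 : (0:ℝ) ≤ n ^ (-α) := Real.rpow_nonneg hy.le _
      positivity
    have hmeasS : MeasurableSet {x : EuclideanSpace ℝ (Fin d) | 2 * ‖x‖ ≤ ‖y‖} :=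
      measurableSet_le (by fun_prop) measurable_const
    calc
      (∫⁻ x in {x : EuclideanSpace ℝ (Fin d) | 2 * ‖x‖ ≤ ‖y‖},
          ENNReal.ofReal (|f y| ^ p / ‖x - y‖ ^ (d : ℝ) * ‖x‖ ^ (-α) * ‖y‖ ^ (-α)))
          ≤ ∫⁻ x in {x : EuclideanSpace ℝ (Fin d) | 2 * ‖x‖ ≤ ‖y‖},
            ENNReal.ofReal K * ENNReal.ofReal (‖x‖ ^ (-α)) := by
        refine setLIntegral_mono' hmeasS fun x hx => ?_
        rw [← ENNReal.ofReal_mul hK0]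
        refine ENNReal.ofReal_le_ofReal ?_
        have hxy : n / 2 ≤ ‖x - y‖ := by
          have h1 : ‖y‖ - ‖x‖ ≤ ‖y - x‖ := norm_sub_norm_le y x
          have h2 : 2 * ‖x‖ ≤ ‖y‖ := hx
          rw [norm_sub_rev] at h1
          linarith
        have hdiv : A / ‖x - y‖ ^ (d:ℝ) ≤ A * 2 ^ (d:ℝ) * n ^ (-(d:ℝ)) := by
          have hpow : (n / 2) ^ (d:ℝ) ≤ ‖x - y‖ ^ (d:ℝ) :=
            Real.rpow_le_rpow (by positivity) hxy (by positivity)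
          have hp2 : (0:ℝ) < (n / 2) ^ (d:ℝ) := Real.rpow_pos_of_pos (by positivity) _
          calc A / ‖x - y‖ ^ (d:ℝ) ≤ A / (n / 2) ^ (d:ℝ) := by gcongr
            _ = A * 2 ^ (d:ℝ) * n ^ (-(d:ℝ)) := by
              rw [Real.div_rpow hy.le (by norm_num : (0:ℝ) ≤ 2),
                Real.rpow_neg hy.le]
              field_simp
        calc A / ‖x - y‖ ^ (d:ℝ) * ‖x‖ ^ (-α) * n ^ (-α)
            ≤ (A * 2 ^ (d:ℝ) * n ^ (-(d:ℝ))) * ‖x‖ ^ (-α) * n ^ (-α) := by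
              have := Real.rpow_nonneg (norm_nonneg x) (-α)
              have := Real.rpow_nonneg hy.le (-α)
              gcongr
          _ = K * ‖x‖ ^ (-α) := by rw [hK]; ring
      _ = ENNReal.ofReal K *
            ∫⁻ x in {x : EuclideanSpace ℝ (Fin d) | 2 * ‖x‖ ≤ ‖y‖},
              ENNReal.ofReal (‖x‖ ^ (-α)) := by
        rw [lintegral_const_mul' _ _ ENNReal.ofReal_ne_top]
      _ ≤ ENNReal.ofReal K *
            ∫⁻ x in closedBall (0 : EuclideanSpace ℝ (Fin d)) (n / 2),
              ENNReal.ofReal (‖x‖ ^ (-α)) := by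
        refine mul_le_mul_right (lintegral_mono_set fun x hx => ?_) _
        rw [mem_closedBall_zero_iff]
        have : 2 * ‖x‖ ≤ n := hx
        linarith
      _ ≤ ENNReal.ofReal K *
            ENNReal.ofReal (sphereMeasure d * (n / 2) ^ ((d:ℝ) - α) / ((d:ℝ) - α)) := by
        exact mul_le_mul_right (closedBall_rpow_lintegral d hd α hα hα' _ (by positivity)) _
      _ ≤ ENNReal.ofReal C * ENNReal.ofReal (A * n ^ (-(2 * α))) := by
        rw [← ENNReal.ofReal_mul hK0, ← ENNReal.ofReal_mul (by positivity)]
        refine ENNReal.ofReal_le_ofReal ?_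
        have h2 : (2:ℝ) ^ (d:ℝ) / 2 ^ ((d:ℝ) - α) = 2 ^ α := by
          rw [← Real.rpow_sub (by norm_num : (0:ℝ) < 2)]
          ring_nf
        have h3 : n ^ (-(d:ℝ)) * n ^ (-α) * n ^ ((d:ℝ) - α) = n ^ (-(2*α)) := by
          rw [← Real.rpow_add hy, ← Real.rpow_add hy]
          ring_nf
        have key : (2:ℝ) ^ (d:ℝ) * n ^ (-(d:ℝ)) * n ^ (-α) * (n/2) ^ ((d:ℝ) - α)
            = 2 ^ α * n ^ (-(2*α)) := by
          rw [Real.div_rpow hy.le (by norm_num : (0:ℝ) ≤ 2)]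
          calc (2:ℝ) ^ (d:ℝ) * n ^ (-(d:ℝ)) * n ^ (-α) * (n ^ ((d:ℝ)-α) / 2 ^ ((d:ℝ)-α))
              = ((2:ℝ) ^ (d:ℝ) / 2 ^ ((d:ℝ)-α)) * (n ^ (-(d:ℝ)) * n ^ (-α) * n ^ ((d:ℝ)-α)) := by
                ring
            _ = 2 ^ α * n ^ (-(2*α)) := by rw [h2, h3]
        have hpow2 : (2:ℝ) ^ α ≤ 2 ^ (2 * (d:ℝ) - α) :=
          Real.rpow_le_rpow_of_exponent_le (by norm_num) (by linarith)
        calc K * (sphereMeasure d * (n/2) ^ ((d:ℝ) - α) / ((d:ℝ) - α))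
            = (A * sphereMeasure d / ((d:ℝ) - α)) *
                ((2:ℝ) ^ (d:ℝ) * n ^ (-(d:ℝ)) * n ^ (-α) * (n/2) ^ ((d:ℝ) - α)) := by
              rw [hK]; ring
          _ = (A * sphereMeasure d / ((d:ℝ) - α)) * (2 ^ α * n ^ (-(2*α))) := by rw [key]
          _ ≤ (A * sphereMeasure d / ((d:ℝ) - α)) * (2 ^ (2*(d:ℝ)-α) * n ^ (-(2*α))) := by
              have hnn : (0:ℝ) ≤ n ^ (-(2*α)) := Real.rpow_nonneg hy.le _
              have : (0:ℝ) ≤ A * sphereMeasure d / ((d:ℝ) - α) := by positivity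
              gcongr
          _ = C * (A * n ^ (-(2*α))) := by rw [hC]; ring
  calc
    (∫⁻ y : EuclideanSpace ℝ (Fin d),
      ∫⁻ x in {x : EuclideanSpace ℝ (Fin d) | 2 * ‖x‖ ≤ ‖y‖},
        ENNReal.ofReal
          (|f y| ^ p / ‖x - y‖ ^ (d : ℝ) * ‖x‖ ^ (-α) * ‖y‖ ^ (-α)))
        ≤ ∫⁻ y : EuclideanSpace ℝ (Fin d),
            ENNReal.ofReal C * ENNReal.ofReal (|f y| ^ p * ‖y‖ ^ (-(2 * α))) :=
      lintegral_mono inner_bound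
    _ = ENNReal.ofReal C *
          ∫⁻ y : EuclideanSpace ℝ (Fin d),
            ENNReal.ofReal (|f y| ^ p * ‖y‖ ^ (-(2 * α))) :=
      lintegral_const_mul' _ _ ENNReal.ofReal_ne_top
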